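/- With Y_t := X_t(1 − X_{t−1}) as above, E(Y_t · Y_{t+1}) = 0, and for every k ≥ 2, E(Y_t · Y_{t+k}) = (α^2 β^2 / (α+β)^2)·(1 − (1 − α − β)^{k−1}). Consequently Cov(Y_t, Y_{t+k}) = −(α^2 β^2/(α+β)^2)·(1−α−β)^{k−1} for all k ≥ 1. -/

import Mathlib

open MeasureTheory ProbabilityTheory Filter

lemma step_lemma {Ω : Type*} [MeasurableSpace Ω] (μ : Measure Ω) [IsProbabilityMeasure μ]
    (X : ℕ → Ω → ℕ) {α β : ℝ}
    (hmeas : ∀ t, Measurable (X t))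
    (hval : ∀ t ω, X t ω ≤ 1)
    (hmarkov : ∀ (t : ℕ) (x : ℕ → ℕ),
      μ {ω | ∀ i ≤ t, X i ω = x i} ≠ 0 →
      ProbabilityTheory.cond μ {ω | ∀ i ≤ t, X i ω = x i} {ω | X (t + 1) ω = 1}
        = if x t = 1 then ENNReal.ofReal (1 - β) else ENNReal.ofReal α)
    (t : ℕ) (b : ℕ) (A : Set Ω)
    (hdet : ∀ ω ω', (∀ i ≤ t, X i ω = X i ω') → ω ∈ A → ω' ∈ A)
    (hb : ∀ ω ∈ A, X t ω = b) :
    μ (A ∩ {ω | X (t + 1) ω = 1})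
      = (if b = 1 then ENNReal.ofReal (1 - β) else ENNReal.ofReal α) * μ A := by
  classical
  set c : ENNReal := if b = 1 then ENNReal.ofReal (1 - β) else ENNReal.ofReal α with hc
  set S1 : Set Ω := {ω | X (t + 1) ω = 1} with hS1
  have hS1meas : MeasurableSet S1 := (hmeas (t + 1)) (measurableSet_singleton 1)
  set ι := Fin (t + 1) → Fin 2 with hι
  let ext : ι → ℕ → ℕ := fun v i => if h : i < t + 1 then (v ⟨i, h⟩ : ℕ) else 0
  let C : ι → Set Ω := fun v => {ω | ∀ i ≤ t, X i ω = ext v i}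
  have hext : ∀ (v : ι) (i : ℕ) (h : i ≤ t), ext v i = (v ⟨i, Nat.lt_succ_of_le h⟩ : ℕ) := by
    intro v i h
    simp only [ext, dif_pos (Nat.lt_succ_of_le h)]
  have hCmeas : ∀ v, MeasurableSet (C v) := by
    intro v
    have : C v = ⋂ i ∈ Finset.Iic t, X i ⁻¹' {ext v i} := by
      ext ω; simp [C, Set.mem_iInter]
    rw [this]
    exact Finset.measurableSet_biInter _ fun i _ => (hmeas i) (measurableSet_singleton _)
  have hCdisj : Pairwise (Function.onFun Disjoint C) := by
    intro v w hvw
    rw [Function.onFun, Set.disjoint_left]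
    intro ω hv hw
    apply hvw
    funext j
    have h1 := hv j.val (Nat.lt_succ_iff.mp j.isLt)
    have h2 := hw j.val (Nat.lt_succ_iff.mp j.isLt)
    rw [hext v _ (Nat.lt_succ_iff.mp j.isLt)] at h1
    rw [hext w _ (Nat.lt_succ_iff.mp j.isLt)] at h2
    apply Fin.val_injective
    simp only [Fin.eta] at h1 h2
    omega
  have hCcover : (⋃ v, C v) = Set.univ := by
    ext ω
    simp only [Set.mem_iUnion, Set.mem_univ, iff_true]
    refine ⟨fun i => ⟨X i ω, lt_of_le_of_lt (hval i ω) one_lt_two⟩, fun i hi => ?_⟩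
    simp only [ext, dif_pos (Nat.lt_succ_of_le hi)]
  have hAC : ∀ v, A ∩ C v = ∅ ∨ A ∩ C v = C v := by
    intro v
    rcases Set.eq_empty_or_nonempty (A ∩ C v) with h | ⟨ω0, hω0A, hω0C⟩
    · exact Or.inl h
    · refine Or.inr (Set.eq_of_subset_of_subset Set.inter_subset_right fun ω' hω' => ?_)
      refine ⟨hdet ω0 ω' (fun i hi => ?_) hω0A, hω'⟩
      rw [hω0C i hi, hω' i hi]
  have hACmeas : ∀ v, MeasurableSet (A ∩ C v) := by
    intro v
    rcases hAC v with h | h <;> rw [h]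
    · exact MeasurableSet.empty
    · exact hCmeas v
  have hcyl : ∀ v, μ (C v ∩ S1) = (if ext v t = 1 then ENNReal.ofReal (1 - β) else ENNReal.ofReal α) * μ (C v) := by
    intro v
    by_cases h0 : μ (C v) = 0
    · rw [h0, mul_zero]
      exact le_antisymm (le_trans (measure_mono Set.inter_subset_left) h0.le) zero_le
    · have hcond := hmarkov t (ext v) h0
      rw [cond_apply (hCmeas v) μ S1] at hcond
      have := congrArg (fun x => μ (C v) * x) hcond
      simp only [← mul_assoc, ENNReal.mul_inv_cancel h0 (measure_ne_top μ _), one_mul] at this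
      rw [this, mul_comm]
  have hpiece : ∀ v, μ ((A ∩ C v) ∩ S1) = c * μ (A ∩ C v) := by
    intro v
    rcases hAC v with h | h
    · rw [h]; simp
    · rw [h, hcyl v]
      rcases Set.eq_empty_or_nonempty (C v) with he | ⟨ω, hω⟩
      · rw [he]; simp
      · have hωA : ω ∈ A := by rw [← h] at hω; exact hω.1
        have : ext v t = b := by rw [← hω t le_rfl]; exact hb ω hωA
        rw [this, ← hc]
  have hkey : ∀ (T : Set Ω), MeasurableSet T → μ ((⋃ v, (A ∩ C v)) ∩ T) = ∑' v, μ ((A ∩ C v) ∩ T) := by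
    intro T hT
    rw [Set.iUnion_inter]
    exact measure_iUnion
      (fun v w hvw => Set.disjoint_of_subset (Set.inter_subset_left.trans Set.inter_subset_right)
        (Set.inter_subset_left.trans Set.inter_subset_right) (hCdisj hvw))
      (fun v => (hACmeas v).inter hT)
  have hAeq : (⋃ v, (A ∩ C v)) = A := by
    rw [← Set.inter_iUnion, hCcover, Set.inter_univ]
  have h1 := hkey S1 hS1meas
  rw [hAeq] at h1
  have h2 := measure_iUnion (μ := μ) (fun v w hvw => Set.disjoint_of_subset Set.inter_subset_right
          Set.inter_subset_right (hCdisj hvw)) hACmeas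
  rw [hAeq] at h2
  rw [h1, tsum_congr hpiece, ENNReal.tsum_mul_left, h2]

theorem stmt13 (α β : ℝ) (hα : 0 < α) (hβ : 0 < β) (hαβ : α + β ≤ 1)
    {Ω : Type*} [MeasurableSpace Ω] (μ : Measure Ω) [IsProbabilityMeasure μ]
    (X : ℕ → Ω → ℕ)
    (hmeas : ∀ t, Measurable (X t))
    (hval : ∀ t ω, X t ω ≤ 1)
    (hmarkov : ∀ (t : ℕ) (x : ℕ → ℕ),
      μ {ω | ∀ i ≤ t, X i ω = x i} ≠ 0 →
      ProbabilityTheory.cond μ {ω | ∀ i ≤ t, X i ω = x i} {ω | X (t + 1) ω = 1}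
        = if x t = 1 then ENNReal.ofReal (1 - β) else ENNReal.ofReal α)
    (hinit : μ {ω | X 0 ω = 1} = ENNReal.ofReal (α / (α + β)))
    (Y : ℕ → Ω → ℝ)
    (hY : ∀ s ω, Y s ω = (X (s + 1) ω : ℝ) * (1 - (X s ω : ℝ))) :
    ∀ t,
      (∫ ω, Y t ω * Y (t + 1) ω ∂μ) = 0 ∧
      (∀ k, (∫ ω, Y t ω * Y (t + (k + 2)) ω ∂μ)
        = α ^ 2 * β ^ 2 / (α + β) ^ 2 * (1 - (1 - α - β) ^ (k + 1))) ∧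
      (∀ k, (∫ ω, Y t ω * Y (t + (k + 1)) ω ∂μ)
          - (∫ ω, Y t ω ∂μ) * (∫ ω, Y (t + (k + 1)) ω ∂μ)
        = -(α ^ 2 * β ^ 2 / (α + β) ^ 2) * (1 - α - β) ^ k) := by
  have hab : 0 < α + β := by linarith
  have hβ1 : β ≤ 1 := by linarith
  have hlam0 : 0 ≤ 1 - α - β := by linarith
  have hlam1 : 1 - α - β < 1 := by linarith
  have hlampow : ∀ k : ℕ, 0 ≤ (1 - α - β) ^ k ∧ (1 - α - β) ^ k ≤ 1 :=
    fun k => ⟨pow_nonneg hlam0 k, pow_le_one₀ hlam0 (by linarith)⟩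
  -- complement facts
  have hcompl : ∀ s : ℕ, {ω : Ω | X s ω = 0} = {ω : Ω | X s ω = 1}ᶜ := by
    intro s; ext ω
    have := hval s ω
    simp only [Set.mem_setOf_eq, Set.mem_compl_iff]
    omega
  have h1meas : ∀ s : ℕ, MeasurableSet {ω : Ω | X s ω = 1} :=
    fun s => (hmeas s) (measurableSet_singleton 1)
  have h0meas : ∀ s : ℕ, MeasurableSet {ω : Ω | X s ω = 0} :=
    fun s => (hmeas s) (measurableSet_singleton 0)
  -- stationarity
  have hstat : ∀ s : ℕ, μ {ω | X s ω = 1} = ENNReal.ofReal (α / (α + β)) := by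
    intro s
    induction s with
    | zero => exact hinit
    | succ s ih =>
      have h0 : μ {ω : Ω | X s ω = 0} = ENNReal.ofReal (β / (α + β)) := by
        rw [hcompl s, prob_compl_eq_one_sub (h1meas s), ih]
        rw [show (β / (α + β)) = 1 - α / (α + β) by field_simp; ring]
        rw [ENNReal.ofReal_sub 1 (by positivity), ENNReal.ofReal_one]
      have hdecomp : {ω : Ω | X (s + 1) ω = 1}
          = ({ω : Ω | X s ω = 1} ∩ {ω : Ω | X (s+1) ω = 1})
            ∪ ({ω : Ω | X s ω = 0} ∩ {ω : Ω | X (s+1) ω = 1}) := by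
        ext ω
        have := hval s ω
        simp only [Set.mem_setOf_eq, Set.mem_union, Set.mem_inter_iff]
        omega
      have hdisj : Disjoint ({ω : Ω | X s ω = 1} ∩ {ω : Ω | X (s+1) ω = 1})
          (({ω : Ω | X s ω = 0}) ∩ {ω : Ω | X (s+1) ω = 1}) := by
        rw [Set.disjoint_left]
        rintro ω ⟨h1, -⟩ ⟨h2, -⟩
        simp only [Set.mem_setOf_eq] at h1 h2
        omega
      have e1 := step_lemma μ X hmeas hval hmarkov s 1 {ω | X s ω = 1}
        (fun ω ω' h hm => by simp only [Set.mem_setOf_eq] at *; rw [← h s le_rfl]; exact hm)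
        (fun ω hm => hm)
      have e0 := step_lemma μ X hmeas hval hmarkov s 0 {ω | X s ω = 0}
        (fun ω ω' h hm => by simp only [Set.mem_setOf_eq] at *; rw [← h s le_rfl]; exact hm)
        (fun ω hm => hm)
      rw [if_pos rfl] at e1
      rw [if_neg (by norm_num : ¬ (0 : ℕ) = 1)] at e0
      rw [hdecomp, measure_union hdisj ((h0meas s).inter (h1meas (s+1))), e1, e0, ih, h0]
      rw [← ENNReal.ofReal_mul (p := 1 - β) (by linarith),
        ← ENNReal.ofReal_mul (p := α) (by linarith),
        ← ENNReal.ofReal_add (mul_nonneg (by linarith) (by positivity))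
          (mul_nonneg hα.le (by positivity))]
      congr 1
      field_simp
      ring
  have h0stat : ∀ s : ℕ, μ {ω : Ω | X s ω = 0} = ENNReal.ofReal (β / (α + β)) := by
    intro s
    rw [hcompl s, prob_compl_eq_one_sub (h1meas s), hstat s]
    rw [show (β / (α + β)) = 1 - α / (α + β) by field_simp; ring]
    rw [ENNReal.ofReal_sub 1 (by positivity), ENNReal.ofReal_one]
  -- the basic event for Y
  have hSmeas : ∀ s : ℕ, MeasurableSet {ω : Ω | X s ω = 0 ∧ X (s+1) ω = 1} := by
    intro s
    exact (h0meas s).inter (h1meas (s+1))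
  have hjoint : ∀ s : ℕ, μ {ω | X s ω = 0 ∧ X (s+1) ω = 1} = ENNReal.ofReal (α * β / (α + β)) := by
    intro s
    have e0 := step_lemma μ X hmeas hval hmarkov s 0 {ω | X s ω = 0}
      (fun ω ω' h hm => by simp only [Set.mem_setOf_eq] at *; rw [← h s le_rfl]; exact hm)
      (fun ω hm => hm)
    simp only [if_neg (by norm_num : ¬ (0 : ℕ) = 1)] at e0
    have : {ω : Ω | X s ω = 0 ∧ X (s+1) ω = 1}
        = {ω : Ω | X s ω = 0} ∩ {ω : Ω | X (s+1) ω = 1} := rfl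
    rw [this, e0, h0stat s, ← ENNReal.ofReal_mul (by linarith)]
    congr 1
    field_simp
  -- indicator representations
  have hYind : ∀ (s : ℕ) (ω : Ω),
      Y s ω = ({ω : Ω | X s ω = 0 ∧ X (s+1) ω = 1}).indicator 1 ω := by
    intro s ω
    rw [hY]
    have h1 := hval s ω
    have h2 := hval (s+1) ω
    by_cases hm : ω ∈ {ω : Ω | X s ω = 0 ∧ X (s+1) ω = 1}
    · have hm' : X s ω = 0 ∧ X (s+1) ω = 1 := hm
      rw [Set.indicator_of_mem hm, hm'.1, hm'.2]
      norm_num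
    · rw [Set.indicator_of_notMem hm]
      have hm' : ¬ (X s ω = 0 ∧ X (s+1) ω = 1) := hm
      have : X (s+1) ω = 0 ∨ X s ω = 1 := by omega
      rcases this with h | h <;> rw [h] <;> push_cast <;> ring
  have hprod : ∀ (s r : ℕ) (ω : Ω),
      Y s ω * Y r ω = ({ω : Ω | X s ω = 0 ∧ X (s+1) ω = 1}
        ∩ {ω : Ω | X r ω = 0 ∧ X (r+1) ω = 1}).indicator 1 ω := by
    intro s r ω
    rw [hYind s ω, hYind r ω]
    by_cases hs : ω ∈ {ω : Ω | X s ω = 0 ∧ X (s+1) ω = 1} <;>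
      by_cases hr : ω ∈ {ω : Ω | X r ω = 0 ∧ X (r+1) ω = 1} <;>
      simp [Set.indicator_apply, hs, hr, Set.mem_inter_iff]
  have hEY : ∀ s : ℕ, (∫ ω, Y s ω ∂μ) = α * β / (α + β) := by
    intro s
    simp only [hYind]
    rw [integral_indicator_one (hSmeas s), measureReal_def, hjoint s, ENNReal.toReal_ofReal (by positivity)]
  intro t
  -- part 1 : pointwise zero
  have hzero : ∀ ω, Y t ω * Y (t + 1) ω = 0 := by
    intro ω
    rw [hY, hY]
    have h := hval (t+1) ω
    have : X (t+1) ω = 0 ∨ X (t+1) ω = 1 := by omega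
    rcases this with h | h <;> rw [h] <;> push_cast <;> ring
  have part1 : (∫ ω, Y t ω * Y (t + 1) ω ∂μ) = 0 := by
    simp only [hzero, integral_zero]
  -- the Markov recursion for the joint chain
  have hfg : ∀ k : ℕ,
      μ ({ω | X t ω = 0 ∧ X (t+1) ω = 1} ∩ {ω | X (t+1+k) ω = 1})
        = ENNReal.ofReal (α * β / (α + β) * ((α + β * (1 - α - β) ^ k) / (α + β)))
      ∧ μ ({ω | X t ω = 0 ∧ X (t+1) ω = 1} ∩ {ω | X (t+1+k) ω = 0})
        = ENNReal.ofReal (α * β / (α + β) * (β * (1 - (1 - α - β) ^ k) / (α + β))) := by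
    intro k
    induction k with
    | zero =>
      constructor
      · have he : {ω : Ω | X t ω = 0 ∧ X (t+1) ω = 1} ∩ {ω : Ω | X (t+1+0) ω = 1}
            = {ω : Ω | X t ω = 0 ∧ X (t+1) ω = 1} := by
          ext ω
          simp only [Set.mem_inter_iff, Set.mem_setOf_eq, Nat.add_zero, add_zero]
          tauto
        rw [he, hjoint t]
        congr 1
        rw [pow_zero]
        field_simp
      · have he : {ω : Ω | X t ω = 0 ∧ X (t+1) ω = 1} ∩ {ω : Ω | X (t+1+0) ω = 0}
            = (∅ : Set Ω) := by
          ext ω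
          simp only [Set.mem_inter_iff, Set.mem_setOf_eq, Nat.add_zero, add_zero,
            Set.mem_empty_iff_false, iff_false]
          omega
        rw [he, measure_empty]
        rw [pow_zero]
        norm_num
    | succ k ih =>
      obtain ⟨ihf, ihg⟩ := ih
      set s := t + 1 + k with hs
      have hts : t ≤ s := by omega
      have ht1s : t + 1 ≤ s := by omega
      -- decompose over the value of X s
      have hdecomp : {ω : Ω | X t ω = 0 ∧ X (t+1) ω = 1} ∩ {ω : Ω | X (s+1) ω = 1}
          = (({ω : Ω | X t ω = 0 ∧ X (t+1) ω = 1} ∩ {ω : Ω | X s ω = 1}) ∩ {ω : Ω | X (s+1) ω = 1})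
            ∪ (({ω : Ω | X t ω = 0 ∧ X (t+1) ω = 1} ∩ {ω : Ω | X s ω = 0}) ∩ {ω : Ω | X (s+1) ω = 1}) := by
        ext ω
        have := hval s ω
        simp only [Set.mem_inter_iff, Set.mem_setOf_eq, Set.mem_union]
        omega
      have hdisj : Disjoint
          (({ω : Ω | X t ω = 0 ∧ X (t+1) ω = 1} ∩ {ω : Ω | X s ω = 1}) ∩ {ω : Ω | X (s+1) ω = 1})
          (({ω : Ω | X t ω = 0 ∧ X (t+1) ω = 1} ∩ {ω : Ω | X s ω = 0}) ∩ {ω : Ω | X (s+1) ω = 1}) := by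
        rw [Set.disjoint_left]
        rintro ω ⟨⟨-, h1⟩, -⟩ ⟨⟨-, h2⟩, -⟩
        simp only [Set.mem_setOf_eq] at h1 h2
        omega
      have e1 := step_lemma μ X hmeas hval hmarkov s 1
        ({ω | X t ω = 0 ∧ X (t+1) ω = 1} ∩ {ω | X s ω = 1})
        (by
          rintro ω ω' h ⟨⟨ha, hb⟩, hc⟩
          simp only [Set.mem_inter_iff, Set.mem_setOf_eq] at *
          exact ⟨⟨by rw [← h t hts]; exact ha, by rw [← h (t+1) ht1s]; exact hb⟩,
            by rw [← h s le_rfl]; exact hc⟩)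
        (fun ω hm => hm.2)
      have e0 := step_lemma μ X hmeas hval hmarkov s 0
        ({ω | X t ω = 0 ∧ X (t+1) ω = 1} ∩ {ω | X s ω = 0})
        (by
          rintro ω ω' h ⟨⟨ha, hb⟩, hc⟩
          simp only [Set.mem_inter_iff, Set.mem_setOf_eq] at *
          exact ⟨⟨by rw [← h t hts]; exact ha, by rw [← h (t+1) ht1s]; exact hb⟩,
            by rw [← h s le_rfl]; exact hc⟩)
        (fun ω hm => hm.2)
      rw [if_pos rfl] at e1
      rw [if_neg (by norm_num : ¬ (0 : ℕ) = 1)] at e0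
      have hmeasA : MeasurableSet ({ω : Ω | X t ω = 0 ∧ X (t+1) ω = 1} ∩ {ω : Ω | X s ω = 0}) :=
        (hSmeas t).inter (h0meas s)
      have hf1 : μ ({ω | X t ω = 0 ∧ X (t+1) ω = 1} ∩ {ω | X (s+1) ω = 1})
          = ENNReal.ofReal (α * β / (α + β) * ((α + β * (1 - α - β) ^ (k+1)) / (α + β))) := by
        rw [hdecomp, measure_union hdisj (hmeasA.inter (h1meas (s+1))), e1, e0, ihf, ihg]
        have hc0 : (0:ℝ) ≤ α * β / (α + β) := by positivity
        have hp := (hlampow k).1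
        have hp1 := (hlampow k).2
        have q1 : (0:ℝ) ≤ α * β / (α + β) * ((α + β * (1 - α - β) ^ k) / (α + β)) :=
          mul_nonneg hc0 (div_nonneg (by nlinarith) hab.le)
        have q2 : (0:ℝ) ≤ α * β / (α + β) * (β * (1 - (1 - α - β) ^ k) / (α + β)) :=
          mul_nonneg hc0 (div_nonneg (by nlinarith) hab.le)
        rw [← ENNReal.ofReal_mul (p := 1 - β) (by linarith),
          ← ENNReal.ofReal_mul (p := α) (by linarith),
          ← ENNReal.ofReal_add (mul_nonneg (by linarith) q1) (mul_nonneg hα.le q2)]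
        congr 1
        field_simp
        ring
      refine ⟨hf1, ?_⟩
      -- g part by complementation within the event
      rw [show t + 1 + (k + 1) = s + 1 from by omega]
      have hpart : μ ({ω | X t ω = 0 ∧ X (t+1) ω = 1} ∩ {ω | X (s+1) ω = 1})
            + μ ({ω | X t ω = 0 ∧ X (t+1) ω = 1} ∩ {ω | X (s+1) ω = 0})
          = μ {ω | X t ω = 0 ∧ X (t+1) ω = 1} := by
        rw [← measure_union ?_ ((hSmeas t).inter (h0meas (s+1)))]
        · congr 1
          ext ω
          have := hval (s+1) ω
          simp only [Set.mem_inter_iff, Set.mem_setOf_eq, Set.mem_union]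
          omega
        · rw [Set.disjoint_left]
          rintro ω ⟨-, h1⟩ ⟨-, h2⟩
          simp only [Set.mem_setOf_eq] at h1 h2
          omega
      rw [hf1, hjoint t] at hpart
      have hfin : ENNReal.ofReal (α * β / (α + β) * ((α + β * (1 - α - β) ^ (k+1)) / (α + β)))
          ≠ ⊤ := ENNReal.ofReal_ne_top
      have hc0 : (0:ℝ) ≤ α * β / (α + β) := by positivity
      have hp := (hlampow (k+1)).1
      have hp1 := (hlampow (k+1)).2
      have q1 : (0:ℝ) ≤ α * β / (α + β) * ((α + β * (1 - α - β) ^ (k+1)) / (α + β)) :=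
        mul_nonneg hc0 (div_nonneg (by nlinarith) hab.le)
      have q2 : (0:ℝ) ≤ α * β / (α + β) * (β * (1 - (1 - α - β) ^ (k+1)) / (α + β)) :=
        mul_nonneg hc0 (div_nonneg (by nlinarith) hab.le)
      rw [← ENNReal.add_right_inj hfin, hpart, ← ENNReal.ofReal_add q1 q2]
      congr 1
      field_simp
      ring
  -- part 2
  have part2 : ∀ k, (∫ ω, Y t ω * Y (t + (k + 2)) ω ∂μ)
      = α ^ 2 * β ^ 2 / (α + β) ^ 2 * (1 - (1 - α - β) ^ (k + 1)) := by
    intro k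
    set r := t + (k + 2) with hr
    have hrs : r = t + 1 + (k + 1) := by omega
    -- measure of the double event
    have e0 := step_lemma μ X hmeas hval hmarkov r 0
      ({ω | X t ω = 0 ∧ X (t+1) ω = 1} ∩ {ω | X r ω = 0})
      (by
        rintro ω ω' h ⟨⟨ha, hb⟩, hc⟩
        simp only [Set.mem_inter_iff, Set.mem_setOf_eq] at *
        exact ⟨⟨by rw [← h t (by omega)]; exact ha, by rw [← h (t+1) (by omega)]; exact hb⟩,
          by rw [← h r le_rfl]; exact hc⟩)
      (fun ω hm => hm.2)
    simp only [if_neg (by norm_num : ¬ (0 : ℕ) = 1)] at e0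
    have hgval : μ ({ω | X t ω = 0 ∧ X (t+1) ω = 1} ∩ {ω | X r ω = 0})
        = ENNReal.ofReal (α * β / (α + β) * (β * (1 - (1 - α - β) ^ (k+1)) / (α + β))) := by
      rw [hrs]
      exact (hfg (k+1)).2
    have hsetE : {ω : Ω | X t ω = 0 ∧ X (t+1) ω = 1} ∩ {ω : Ω | X r ω = 0 ∧ X (r+1) ω = 1}
        = ({ω : Ω | X t ω = 0 ∧ X (t+1) ω = 1} ∩ {ω : Ω | X r ω = 0}) ∩ {ω : Ω | X (r+1) ω = 1} := by
      ext ω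
      simp only [Set.mem_inter_iff, Set.mem_setOf_eq]
      tauto
    have hmeasure : μ ({ω : Ω | X t ω = 0 ∧ X (t+1) ω = 1} ∩ {ω : Ω | X r ω = 0 ∧ X (r+1) ω = 1})
        = ENNReal.ofReal (α ^ 2 * β ^ 2 / (α + β) ^ 2 * (1 - (1 - α - β) ^ (k + 1))) := by
      rw [hsetE, e0, hgval, ← ENNReal.ofReal_mul (by linarith)]
      congr 1
      field_simp
    simp only [hprod t r]
    rw [integral_indicator_one ((hSmeas t).inter (hSmeas r)), measureReal_def, hmeasure,
      ENNReal.toReal_ofReal]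
    have hp := (hlampow (k+1)).1
    have hp1 := (hlampow (k+1)).2
    apply mul_nonneg (by positivity) (by linarith)
  refine ⟨part1, part2, ?_⟩
  -- part 3
  intro k
  cases k with
  | zero =>
    rw [show t + (0 + 1) = t + 1 by omega, part1, hEY, hEY, pow_zero]
    have hne : α + β ≠ 0 := ne_of_gt hab
    field_simp
    ring
  | succ j =>
    rw [show t + (j + 1 + 1) = t + (j + 2) by omega, part2 j, hEY, hEY]
    have hne : α + β ≠ 0 := ne_of_gt hab
    field_simp
    ring
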